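/- arXiv:2005.00772 — 2 statements merged into one kernel-verified Lean document; each statement's English description precedes it below -/
import Mathlib

section
/- For all natural numbers n, λ and μ, ∑_{k=0}^{n} (−1)^k · binom(n,k) · [binom(2k+2λ, k+λ) · binom(2n−2k+2μ, n−k+μ)] / [binom(k+2λ, λ) · binom(n−k+2μ, μ)] equals χ(n even) · [binom(n, n/2) · binom(n+λ+μ, n/2)] / [binom(λ+n/2, λ) · binom(μ+n/2, μ)], as an equality of rational numbers (the sum vanishes when n is odd, and for even n the right-hand side uses n/2). -/
open Finset Nat

namespace Stmt4

noncomputable def T (l m k j : ℕ) : ℚ :=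
  (-1) ^ k * (((k + j)! : ℚ) * (l ! : ℚ) * (m ! : ℚ) * ((2 * k + 2 * l)! : ℚ) * ((2 * j + 2 * m)! : ℚ)) /
    ((k ! : ℚ) * (j ! : ℚ) * ((k + l)! : ℚ) * ((k + 2 * l)! : ℚ) * ((j + m)! : ℚ) * ((j + 2 * m)! : ℚ))

def Nt (n k l m : ℚ) : ℚ :=
  k^1 * ((-40:ℚ)*l + (-72:ℚ)*l*m + (-56:ℚ)*l*m*m + (-16:ℚ)*l*m*m*m + (-32:ℚ)*l*l + (-40:ℚ)*l*l*m + (-16:ℚ)*l*l*m*m + (-72:ℚ)*n*l + (-84:ℚ)*n*l*m + (-32:ℚ)*n*l*m*m + (-40:ℚ)*n*l*l + (-24:ℚ)*n*l*l*m + (-42:ℚ)*n*n*l + (-24:ℚ)*n*n*l*m + (-12:ℚ)*n*n*l*l + (-8:ℚ)*n*n*n*l)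
  + k^2 * ((-20:ℚ) + (-36:ℚ)*m + (-28:ℚ)*m*m + (-8:ℚ)*m*m*m + (24:ℚ)*l + (24:ℚ)*l*m + (8:ℚ)*l*m*m + (28:ℚ)*l*l + (16:ℚ)*l*l*m + (-36:ℚ)*n + (-42:ℚ)*n*m + (-16:ℚ)*n*m*m + (24:ℚ)*n*l + (12:ℚ)*n*l*m + (16:ℚ)*n*l*l + (-21:ℚ)*n*n + (-12:ℚ)*n*n*m + (6:ℚ)*n*n*l + (-4:ℚ)*n*n*n)
  + k^3 * ((20:ℚ) + (22:ℚ)*m + (8:ℚ)*m*m + (6:ℚ)*l + (4:ℚ)*l*m + (-4:ℚ)*l*l + (22:ℚ)*n + (12:ℚ)*n*m + (4:ℚ)*n*l + (6:ℚ)*n*n)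
  + k^4 * ((-4:ℚ) + (-2:ℚ)*m + (-2:ℚ)*l + (-2:ℚ)*n)

def Aq (n l m : ℕ) : ℚ := ((n:ℚ)+2+2*l+2*m) * ((n:ℚ)+2+2*l) * ((n:ℚ)+2+2*m)
def Bq (n l m : ℕ) : ℚ := 16 * ((n:ℚ)+1) * ((n:ℚ)+l+m+1) * ((n:ℚ)+l+m+2)

lemma fne (a : ℕ) : ((a ! : ℕ) : ℚ) ≠ 0 := by positivity

lemma Tk (l m k j : ℕ) :
    T l m (k + 1) j * (((k : ℚ) + 1) * ((k : ℚ) + 1 + 2 * l) * (2 * (j : ℚ) + 2 * m + 1))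
      = -(T l m k (j + 1) * ((2 * (k : ℚ) + 2 * l + 1) * ((j : ℚ) + 1) * ((j : ℚ) + 1 + 2 * m))) := by
  unfold T
  rw [show k + 1 + j = (k + j) + 1 from by omega,
      show 2 * (k + 1) + 2 * l = (2 * k + 2 * l + 1) + 1 from by ring,
      show k + 1 + l = (k + l) + 1 from by ring,
      show k + 1 + 2 * l = (k + 2 * l) + 1 from by ring,
      show k + (j + 1) = (k + j) + 1 from by omega,
      show 2 * (j + 1) + 2 * m = (2 * j + 2 * m + 1) + 1 from by ring,
      show j + 1 + m = (j + m) + 1 from by ring,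
      show j + 1 + 2 * m = (j + 2 * m) + 1 from by ring]
  simp only [Nat.factorial_succ, pow_succ]
  push_cast
  field_simp
  ring

lemma Tn (l m k j : ℕ) :
    T l m k j * (4 * ((k : ℚ) + j + 1) * ((k : ℚ) + j + 2) * (2 * (j : ℚ) + 2 * m + 1) * (2 * (j : ℚ) + 2 * m + 3))
      = T l m k (j + 2) * (((j : ℚ) + 1) * ((j : ℚ) + 2) * ((j : ℚ) + 2 * m + 1) * ((j : ℚ) + 2 * m + 2)) := by
  unfold T
  rw [show k + (j + 2) = (k + j) + 1 + 1 from by omega,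
      show 2 * (j + 2) + 2 * m = (2 * j + 2 * m + 1 + 1 + 1) + 1 from by ring,
      show (j + 2) + m = (j + m) + 1 + 1 from by ring,
      show (j + 2) + 2 * m = (j + 2 * m) + 1 + 1 from by ring,
      show j + 2 = j + 1 + 1 from by ring]
  simp only [Nat.factorial_succ]
  push_cast
  field_simp
  ring

lemma abstract (a b n1 n0 p q1 q3 d1 d2 e1 e2 X Y Z : ℚ)
    (hp : p ≠ 0) (hq1 : q1 ≠ 0) (hq3 : q3 ≠ 0) (hd2 : d2 ≠ 0) (he2 : e2 ≠ 0)
    (h2 : Y * (d2 * q1 * q3) = X * d1) (h1 : Z * (e2 * q3) = -(X * e1))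
    (hstar : q1*q3*p*a*d2*e2 - p*b*d1*e2 + n1*e1*d2 + n0*q1*d2*e2 = 0) :
    a * X - b * Y = n1 / (p * q1) * Z - n0 / (p * q3) * X := by
  have hY : Y = X * d1 / (d2 * q1 * q3) := by
    rw [eq_div_iff (mul_ne_zero (mul_ne_zero hd2 hq1) hq3)]; exact h2
  have hZ : Z = -(X * e1) / (e2 * q3) := by
    rw [eq_div_iff (mul_ne_zero he2 hq3)]; exact h1
  subst hY hZ
  field_simp
  linear_combination X * hstar

set_option maxHeartbeats 4000000 in
lemma star (k j l m : ℕ) :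
    (2*(j:ℚ)+2*(m:ℚ)+1)*(2*(j:ℚ)+2*(m:ℚ)+3)*(((k:ℚ)+(j:ℚ))+2)*(Aq (k+j) l m)*(4 * ((k:ℚ) + (j:ℚ) + 1) * ((k:ℚ) + (j:ℚ) + 2))*(((k:ℚ) + 1) * ((k:ℚ) + 1 + 2 * (l:ℚ)))
    - (((k:ℚ)+(j:ℚ))+2)*(Bq (k+j) l m)*(((j:ℚ) + 1) * ((j:ℚ) + 2) * ((j:ℚ) + 2 * (m:ℚ) + 1) * ((j:ℚ) + 2 * (m:ℚ) + 2))*(((k:ℚ) + 1) * ((k:ℚ) + 1 + 2 * (l:ℚ)))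
    + Nt ((k:ℚ)+(j:ℚ)) ((k:ℚ)+1) (l:ℚ) (m:ℚ) * ((2 * (k:ℚ) + 2 * (l:ℚ) + 1) * ((j:ℚ) + 2) * ((j:ℚ) + 2 + 2 * (m:ℚ))) * (4 * ((k:ℚ) + (j:ℚ) + 1) * ((k:ℚ) + (j:ℚ) + 2))
    + Nt ((k:ℚ)+(j:ℚ)) (k:ℚ) (l:ℚ) (m:ℚ) * (2*(j:ℚ)+2*(m:ℚ)+1) * (4 * ((k:ℚ) + (j:ℚ) + 1) * ((k:ℚ) + (j:ℚ) + 2)) * (((k:ℚ) + 1) * ((k:ℚ) + 1 + 2 * (l:ℚ))) = 0 := by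
  unfold Aq Bq Nt
  push_cast
  ring

lemma key (l m k j : ℕ) :
    Aq (k + j) l m * T l m k (j + 2) - Bq (k + j) l m * T l m k j
      = Nt ((k:ℚ)+(j:ℚ)) ((k:ℚ)+1) (l:ℚ) (m:ℚ) / (((((k:ℚ)+(j:ℚ))+2)) * (2*(j:ℚ)+2*(m:ℚ)+1)) * T l m (k+1) (j+1)
        - Nt ((k:ℚ)+(j:ℚ)) (k:ℚ) (l:ℚ) (m:ℚ) / (((((k:ℚ)+(j:ℚ))+2)) * (2*(j:ℚ)+2*(m:ℚ)+3)) * T l m k (j+2) := by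
  have h2 := Tn l m k j
  have h1' : T l m (k + 1) (j + 1) * ((((k:ℚ) + 1) * ((k:ℚ) + 1 + 2 * (l:ℚ))) * (2*(j:ℚ)+2*(m:ℚ)+3))
      = -(T l m k (j + 2) * ((2 * (k:ℚ) + 2 * (l:ℚ) + 1) * ((j:ℚ) + 2) * ((j:ℚ) + 2 + 2 * (m:ℚ)))) := by
    have h1 := Tk l m k (j + 1)
    push_cast at h1
    linear_combination h1
  have h2' : T l m k j * ((4 * ((k:ℚ) + (j:ℚ) + 1) * ((k:ℚ) + (j:ℚ) + 2)) * (2*(j:ℚ)+2*(m:ℚ)+1) * (2*(j:ℚ)+2*(m:ℚ)+3))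
      = T l m k (j + 2) * (((j:ℚ) + 1) * ((j:ℚ) + 2) * ((j:ℚ) + 2 * (m:ℚ) + 1) * ((j:ℚ) + 2 * (m:ℚ) + 2)) := by
    linear_combination h2
  have hp : ((((k:ℚ)+(j:ℚ))+2)) ≠ 0 := by positivity
  have hq1 : (2*(j:ℚ)+2*(m:ℚ)+1) ≠ 0 := by positivity
  have hq3 : (2*(j:ℚ)+2*(m:ℚ)+3) ≠ 0 := by positivity
  have hd2 : (4 * ((k:ℚ) + (j:ℚ) + 1) * ((k:ℚ) + (j:ℚ) + 2)) ≠ 0 := by positivity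
  have he2 : (((k:ℚ) + 1) * ((k:ℚ) + 1 + 2 * (l:ℚ))) ≠ 0 := by positivity
  exact abstract _ _ _ _ _ _ _ _ _ _ _ _ _ _ hp hq1 hq3 hd2 he2 h2' h1' (star k j l m)

lemma bdry (l m n : ℕ) :
    Aq n l m * T l m (n+1) 1 + Aq n l m * T l m (n+2) 0
      + Nt (n:ℚ) ((n:ℚ)+1) (l:ℚ) (m:ℚ) / (((n:ℚ)+2) * (2*(m:ℚ)+1)) * T l m (n+1) 1 = 0 := by
  have h := Tk l m (n+1) 0
  push_cast at h
  have he : (((n:ℚ)+1+1) * ((n:ℚ)+1+1+2*(l:ℚ)) * (2*(0:ℚ)+2*(m:ℚ)+1)) ≠ 0 := by positivity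
  have h0 : T l m (n+2) 0 = -(T l m (n+1) 1 * ((2*((n:ℚ)+1)+2*(l:ℚ)+1) * ((0:ℚ)+1) * ((0:ℚ)+1+2*(m:ℚ))))
      / (((n:ℚ)+1+1) * ((n:ℚ)+1+1+2*(l:ℚ)) * (2*(0:ℚ)+2*(m:ℚ)+1)) := by
    rw [eq_div_iff he]
    linear_combination h
  rw [h0]
  have hne1 : ((n:ℚ)+2) ≠ 0 := by positivity
  have hne2 : (2*(m:ℚ)+1) ≠ 0 := by positivity
  unfold Aq Nt
  field_simp
  ring

lemma recur (l m n : ℕ) :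
    Aq n l m * (∑ k ∈ range (n+3), T l m k (n+2-k)) = Bq n l m * (∑ k ∈ range (n+1), T l m k (n-k)) := by
  set z : ℕ → ℚ := fun k => Nt (n:ℚ) (k:ℚ) (l:ℚ) (m:ℚ) / (((n:ℚ)+2) * (2*((n+1-k : ℕ):ℚ)+2*(m:ℚ)+1)) * T l m k (n+2-k) with hz
  have tele : ∑ k ∈ range (n+1), (z (k+1) - z k) = z (n+1) - z 0 := Finset.sum_range_sub z (n+1)
  have hz0 : z 0 = 0 := by simp [hz, Nt]
  have perk : ∀ k ∈ range (n+1), Aq n l m * T l m k (n+2-k) - Bq n l m * T l m k (n-k) = z (k+1) - z k := by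
    intro k hk; rw [mem_range] at hk
    obtain ⟨j, rfl⟩ : ∃ j, n = k + j := ⟨n - k, by omega⟩
    have e1 : k + j + 2 - k = j + 2 := by omega
    have e2 : k + j - k = j := by omega
    have e4 : k + j + 2 - (k+1) = j + 1 := by omega
    have e3 : k + j + 1 - (k+1) = j := by omega
    have e5 : k + j + 1 - k = j + 1 := by omega
    simp only [hz, e1, e2, e3, e4, e5]
    have hkey := key l m k j
    push_cast
    push_cast at hkey
    linear_combination hkey
  have hsplit : ∑ k ∈ range (n+3), T l m k (n+2-k)
      = (∑ k ∈ range (n+1), T l m k (n+2-k)) + T l m (n+1) (n+2-(n+1)) + T l m (n+2) (n+2-(n+2)) := by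
    rw [Finset.sum_range_succ, Finset.sum_range_succ]
  have hmain : ∑ k ∈ range (n+1), (Aq n l m * T l m k (n+2-k) - Bq n l m * T l m k (n-k)) = z (n+1) - z 0 := by
    rw [Finset.sum_congr rfl perk]; exact tele
  rw [Finset.sum_sub_distrib] at hmain
  have hb := bdry l m n
  have hz1 : z (n+1) = Nt (n:ℚ) ((n:ℚ)+1) (l:ℚ) (m:ℚ) / (((n:ℚ)+2) * (2*(m:ℚ)+1)) * T l m (n+1) 1 := by
    simp only [hz, show n+1-(n+1) = 0 from by omega, show n+2-(n+1) = 1 from by omega]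
    norm_num
  rw [hz0, hz1] at hmain
  rw [hsplit, show n+2-(n+1) = 1 from by omega, show n+2-(n+2) = 0 from by omega,
      mul_add, mul_add, Finset.mul_sum, Finset.mul_sum]
  linarith [hmain, hb]

def RR (l m n : ℕ) : ℚ :=
  (if Even n then 1 else 0) *
    ((n.choose (n / 2) : ℚ) * ((n + l + m).choose (n / 2) : ℚ)) /
    (((l + n / 2).choose l : ℚ) * ((m + n / 2).choose m : ℚ))

lemma recR (l m n : ℕ) : Aq n l m * RR l m (n+2) = Bq n l m * RR l m n := by
  rcases Nat.even_or_odd n with he | ho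
  · obtain ⟨h, rfl⟩ := he
    have e2 : (h + h + 2)/2 = h + 1 := by omega
    have e1 : (h + h)/2 = h := by omega
    have heven1 : Even (h+h) := ⟨h, rfl⟩
    have heven2 : Even (h+h+2) := ⟨h+1, by ring⟩
    simp only [RR, e1, e2, if_pos heven1, if_pos heven2, one_mul]
    rw [Nat.cast_choose ℚ (show h+1 ≤ h+h+2 by omega),
        Nat.cast_choose ℚ (show h+1 ≤ h+h+2+l+m by omega),
        Nat.cast_choose ℚ (show l ≤ l+(h+1) by omega),
        Nat.cast_choose ℚ (show m ≤ m+(h+1) by omega),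
        Nat.cast_choose ℚ (show h ≤ h+h by omega),
        Nat.cast_choose ℚ (show h ≤ h+h+l+m by omega),
        Nat.cast_choose ℚ (show l ≤ l+h by omega),
        Nat.cast_choose ℚ (show m ≤ m+h by omega),
        show h+h+2-(h+1) = h+1 from by omega, show h+h+2+l+m-(h+1) = h+1+l+m from by omega,
        show l+(h+1)-l = h+1 from by omega, show m+(h+1)-m = h+1 from by omega,
        show h+h-h = h from by omega, show h+h+l+m-h = h+l+m from by omega,
        show l+h-l = h from by omega, show m+h-m = h from by omega,
        show h+h+2 = (h+h)+1+1 from by omega, show h+h+2+l+m = (h+h+l+m)+1+1 from by omega,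
        show h+1+l+m = (h+l+m)+1 from by omega, show l+(h+1) = (l+h)+1 from by omega,
        show m+(h+1) = (m+h)+1 from by omega]
    simp only [Nat.factorial_succ]
    unfold Aq Bq
    push_cast
    field_simp
    ring
  · have h1 : ¬ Even n := by rw [Nat.even_iff]; rw [Nat.odd_iff] at ho; omega
    have h2 : ¬ Even (n+2) := by rw [Nat.even_iff]; rw [Nat.odd_iff] at ho; omega
    simp [RR, if_neg h1, if_neg h2]

lemma base0 (l m : ℕ) : (∑ k ∈ range 1, T l m k (0-k)) = RR l m 0 := by
  rw [Finset.sum_range_one]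
  have : RR l m 0 = 1 := by
    simp [RR, Nat.choose_self, Nat.choose_zero_right]
  rw [this]
  unfold T
  norm_num
  field_simp

lemma base1 (l m : ℕ) : (∑ k ∈ range 2, T l m k (1-k)) = RR l m 1 := by
  rw [Finset.sum_range_succ, Finset.sum_range_one]
  have : RR l m 1 = 0 := by simp [RR]
  rw [this, show (1:ℕ)-0 = 1 from rfl, show (1:ℕ)-1 = 0 from rfl]
  unfold T
  simp only [Nat.zero_add, Nat.add_zero]
  rw [show 2*1+2*m = (2*m+1)+1 from by omega, show 2*1+2*l = (2*l+1)+1 from by omega,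
      show (1:ℕ)+m = m+1 from by omega, show (1:ℕ)+2*m = 2*m+1 from by omega,
      show (1:ℕ)+l = l+1 from by omega, show (1:ℕ)+2*l = 2*l+1 from by omega]
  simp only [Nat.factorial_succ, Nat.factorial_one, Nat.factorial_zero]
  push_cast
  field_simp
  ring

lemma main (l m : ℕ) : ∀ n, (∑ k ∈ range (n+1), T l m k (n-k)) = RR l m n := by
  intro n
  induction n using Nat.strong_induction_on with
  | _ n ih =>
    match n, ih with
    | 0, _ => exact base0 l m
    | 1, _ => exact base1 l m
    | (n+2), ih =>
      have hrec := recur l m n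
      have hih := ih n (by omega)
      have hR := recR l m n
      have hA : Aq n l m ≠ 0 := by unfold Aq; positivity
      apply mul_left_cancel₀ hA
      rw [show n+2+1 = n+3 from rfl, hrec, hih, hR]

lemma term_eq (l m n k : ℕ) (hk : k ≤ n) :
    (-1:ℚ)^k * (n.choose k : ℚ) * (((2*k+2*l).choose (k+l) : ℚ) * ((2*n-2*k+2*m).choose (n-k+m) : ℚ))
      / (((k+2*l).choose l : ℚ) * ((n-k+2*m).choose m : ℚ)) = T l m k (n-k) := by
  obtain ⟨j, rfl⟩ : ∃ j, n = k + j := ⟨n-k, by omega⟩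
  rw [show 2*(k+j)-2*k = 2*j from by omega, show k+j-k = j from by omega]
  rw [Nat.cast_choose ℚ (show k ≤ k+j by omega), Nat.cast_choose ℚ (show k+l ≤ 2*k+2*l by omega),
      Nat.cast_choose ℚ (show j+m ≤ 2*j+2*m by omega), Nat.cast_choose ℚ (show l ≤ k+2*l by omega),
      Nat.cast_choose ℚ (show m ≤ j+2*m by omega),
      show k+j-k = j from by omega, show 2*k+2*l-(k+l) = k+l from by omega,
      show 2*j+2*m-(j+m) = j+m from by omega, show k+2*l-l = k+l from by omega,
      show j+2*m-m = j+m from by omega]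
  unfold T
  field_simp

end Stmt4

/-- Theorem E: alternating convolution of quotients of binomial coefficients. -/
theorem stmt_4 (n lam mu : ℕ) :
    ∑ k ∈ Finset.range (n + 1),
        (-1 : ℚ) ^ k * (n.choose k : ℚ) *
          (((2 * k + 2 * lam).choose (k + lam) : ℚ) * ((2 * n - 2 * k + 2 * mu).choose (n - k + mu) : ℚ))
          / (((k + 2 * lam).choose lam : ℚ) * ((n - k + 2 * mu).choose mu : ℚ))
      = (if Even n then 1 else 0) *
          ((n.choose (n / 2) : ℚ) * ((n + lam + mu).choose (n / 2) : ℚ))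
          / (((lam + n / 2).choose lam : ℚ) * ((mu + n / 2).choose mu : ℚ)) := by
  have h : ∀ k ∈ Finset.range (n+1),
      (-1 : ℚ) ^ k * (n.choose k : ℚ) *
          (((2 * k + 2 * lam).choose (k + lam) : ℚ) * ((2 * n - 2 * k + 2 * mu).choose (n - k + mu) : ℚ))
          / (((k + 2 * lam).choose lam : ℚ) * ((n - k + 2 * mu).choose mu : ℚ))
        = Stmt4.T lam mu k (n-k) := by
    intro k hk
    rw [Finset.mem_range] at hk
    exact Stmt4.term_eq lam mu n k (by omega)
  rw [Finset.sum_congr rfl h, Stmt4.main lam mu n]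
  rfl
end

section
/- Let n be a natural number and let c, e, λ be real numbers with λ ≠ 0, (λ)_n ≠ 0, (1−c−n)_n ≠ 0 and (1−e−n)_n ≠ 0. Then the terminating hypergeometric sum ∑_{k=0}^{n} (−n)_k (c)_k (e)_k (1+λ)_k / ((1−c−n)_k (1−e−n)_k (λ)_k · k!) equals [(−n)_{⌊n/2⌋} (1−c−e−n)_{⌊n/2⌋} / ((1−c−n)_{⌊n/2⌋} (1−e−n)_{⌊n/2⌋})] multiplied by (2λ+n)/(2λ) if n is even, and by −(1+n)/(2λ) if n is odd. -/
/-- Real Pochhammer symbol: `(x)_0 = 1`, `(x)_n = x(x+1)⋯(x+n-1)`. -/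
def poch (x : ℝ) (n : ℕ) : ℝ := ∏ i ∈ Finset.range n, (x + i)



lemma poch_zero (x : ℝ) : poch x 0 = 1 := rfl

lemma poch_succ (x : ℝ) (n : ℕ) : poch x (n+1) = poch x n * (x + n) :=
  Finset.prod_range_succ _ _

lemma poch_add (x : ℝ) (m n : ℕ) : poch x (m+n) = poch x m * poch (x+m) n := by
  rw [poch, Finset.prod_range_add]
  congr 1
  exact Finset.prod_congr rfl (fun i _ => by push_cast; ring)

lemma poch_one (x : ℝ) : poch x 1 = x := by simp [poch]

lemma poch_succ' (x : ℝ) (n : ℕ) : poch x (n+1) = x * poch (x+1) n := by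
  rw [show n+1 = 1+n by ring, poch_add, poch_one]; norm_num

lemma poch_reflect (x : ℝ) (n : ℕ) : poch (1 - x - n) n = (-1)^n * poch x n := by
  rw [poch, ← Finset.prod_range_reflect]
  have : ∀ i ∈ Finset.range n, (1 - x - (n:ℝ) + (n - 1 - i : ℕ)) = (-1) * (x + i) := by
    intro i hi
    have hi' : i < n := Finset.mem_range.mp hi
    rw [Nat.cast_sub (by omega), Nat.cast_sub (by omega)]
    push_cast; ring
  rw [Finset.prod_congr rfl this, Finset.prod_mul_distrib, Finset.prod_const,
    Finset.card_range, poch]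

/-- `(n-k)! * poch (-n) k = (-1)^k * n!` for `k ≤ n`. -/
lemma poch_neg_nat (n k : ℕ) (h : k ≤ n) :
    poch (-(n:ℝ)) k * ((n-k).factorial : ℝ) = (-1)^k * (n.factorial : ℝ) := by
  induction k with
  | zero => simp [poch_zero]
  | succ j ih =>
    have hj : j ≤ n := by omega
    have hsub : n - j = (n - (j+1)) + 1 := by omega
    have ih' := ih hj
    rw [hsub] at ih'
    rw [poch_succ]
    have hfac : ((n - (j+1) + 1).factorial : ℝ) = ((n:ℝ) - (j+1) + 1) * (n - (j+1)).factorial := by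
      rw [Nat.factorial_succ, Nat.cast_mul]
      rw [Nat.cast_add, Nat.cast_sub (by omega)]
      push_cast; ring
    rw [hfac] at ih'
    linear_combination (-1 : ℝ) * ih' 

lemma poch_ne_zero_left {x : ℝ} {n : ℕ} (h : poch x n ≠ 0) {k : ℕ} (hk : k ≤ n) :
    poch x k ≠ 0 := by
  obtain ⟨d, rfl⟩ := Nat.exists_eq_add_of_le hk
  rw [poch_add] at h
  exact left_ne_zero_of_mul h

lemma poch_ne_zero_right {x : ℝ} {n k : ℕ} (h : poch x n ≠ 0) (hk : k ≤ n) :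
    poch (x+k) (n-k) ≠ 0 := by
  obtain ⟨d, rfl⟩ := Nat.exists_eq_add_of_le hk
  rw [poch_add] at h
  simpa using right_ne_zero_of_mul h

/-- alternating-sum building blocks -/
def SS (c e : ℝ) (a b ν : ℕ) : ℝ :=
  ∑ k ∈ Finset.range (ν+1), (-1:ℝ)^k * (ν.choose k : ℝ) *
    (poch c (k+a) * poch e (k+a) * (poch c (ν-k+b) * poch e (ν-k+b)))

def TT (c e : ℝ) (a b ν : ℕ) : ℝ :=
  ∑ k ∈ Finset.range (ν+1), (k:ℝ) * ((-1:ℝ)^k * (ν.choose k : ℝ) *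
    (poch c (k+a) * poch e (k+a) * (poch c (ν-k+b) * poch e (ν-k+b))))

lemma neg_one_pow_sub (ν k : ℕ) (h : k ≤ ν) :
    ((-1:ℝ))^(ν-k) = (-1)^ν * (-1)^k := by
  have h2 : ((-1:ℝ))^(k+k) = 1 := Even.neg_one_pow ⟨k, rfl⟩
  calc ((-1:ℝ))^(ν-k) = (-1)^(ν-k) * (-1)^(k+k) := by rw [h2, mul_one]
    _ = (-1)^((ν-k)+(k+k)) := (pow_add _ _ _).symm
    _ = (-1)^(ν+k) := by congr 1; omega
    _ = (-1)^ν * (-1)^k := by rw [pow_add]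

lemma SS_reflect (c e : ℝ) (a b ν : ℕ) : SS c e a b ν = (-1)^ν * SS c e b a ν := by
  rw [SS, ← Finset.sum_range_reflect, SS, Finset.mul_sum]
  refine Finset.sum_congr rfl fun k hk => ?_
  have hk' : k ≤ ν := by have := Finset.mem_range.mp hk; omega
  have h1 : ν + 1 - 1 - k = ν - k := by omega
  have h2 : ν - (ν - k) = k := by omega
  rw [h1, h2, Nat.choose_symm hk', neg_one_pow_sub ν k hk']
  ring

lemma TT_reflect (c e : ℝ) (a b ν : ℕ) :
    TT c e a b ν = (-1)^ν * ((ν:ℝ) * SS c e b a ν - TT c e b a ν) := by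
  rw [TT, ← Finset.sum_range_reflect, SS, TT, mul_sub, Finset.mul_sum, Finset.mul_sum,
    Finset.mul_sum, ← Finset.sum_sub_distrib]
  refine Finset.sum_congr rfl fun k hk => ?_
  have hk' : k ≤ ν := by have := Finset.mem_range.mp hk; omega
  have h1 : ν + 1 - 1 - k = ν - k := by omega
  have h2 : ν - (ν - k) = k := by omega
  rw [h1, h2, Nat.choose_symm hk', neg_one_pow_sub ν k hk', Nat.cast_sub hk']
  ring

lemma pascal_abstract (ν : ℕ) (w : ℕ → ℕ → ℝ) :
    ∑ k ∈ Finset.range (ν+2), (-1:ℝ)^k * ((ν+1).choose k : ℝ) * w k (ν+1-k)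
    = ∑ k ∈ Finset.range (ν+1), (-1:ℝ)^k * (ν.choose k : ℝ) * w k (ν-k+1)
      - ∑ k ∈ Finset.range (ν+1), (-1:ℝ)^k * (ν.choose k : ℝ) * w (k+1) (ν-k) := by
  rw [Finset.sum_range_succ' _ (ν+1)]
  have hsplit : ∀ k ∈ Finset.range (ν+1),
      (-1:ℝ)^(k+1) * ((ν+1).choose (k+1) : ℝ) * w (k+1) (ν+1-(k+1))
      = -((-1:ℝ)^k * (ν.choose k : ℝ) * w (k+1) (ν-k))
        + (-((-1:ℝ)^k * (ν.choose (k+1) : ℝ) * w (k+1) (ν-k))) := by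
    intro k hk
    rw [Nat.succ_sub_succ, Nat.choose_succ_succ, Nat.cast_add]
    ring
  rw [Finset.sum_congr rfl hsplit, Finset.sum_add_distrib]
  have hfirst : ∑ k ∈ Finset.range (ν+1), -((-1:ℝ)^k * (ν.choose k : ℝ) * w (k+1) (ν-k))
      = - ∑ k ∈ Finset.range (ν+1), (-1:ℝ)^k * (ν.choose k : ℝ) * w (k+1) (ν-k) := by
    rw [Finset.sum_neg_distrib]
  have hsecond : ∑ k ∈ Finset.range (ν+1), -((-1:ℝ)^k * ((ν.choose (k+1)) : ℝ) * w (k+1) (ν-k))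
      = ∑ k ∈ Finset.range (ν+1), (-1:ℝ)^k * (ν.choose k : ℝ) * w k (ν-k+1)
        - (-1:ℝ)^0 * ((ν.choose 0) : ℝ) * w 0 (ν-0+1) := by
    rw [Finset.sum_range_succ _ ν, Finset.sum_range_succ' _ ν]
    simp only [Nat.choose_succ_self, Nat.cast_zero]
    have : ∀ k ∈ Finset.range ν,
        (-1:ℝ)^(k+1) * ((ν.choose (k+1)) : ℝ) * w (k+1) (ν-(k+1)+1)
        = -((-1:ℝ)^k * ((ν.choose (k+1)) : ℝ) * w (k+1) (ν-k)) := by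
      intro k hk
      have hk' : k < ν := Finset.mem_range.mp hk
      have h9 : ν - (k+1) + 1 = ν - k := by omega
      rw [h9]; ring
    rw [Finset.sum_congr rfl this]
    ring
  rw [hfirst, hsecond]
  simp only [pow_zero, Nat.choose_zero_right, Nat.cast_one, one_mul, Nat.sub_zero]
  ring

lemma SS_pascal (c e : ℝ) (a b ν : ℕ) :
    SS c e a b (ν+1) = SS c e a (b+1) ν - SS c e (a+1) b ν := by
  have h := pascal_abstract ν
    (fun i j => poch c (i+a) * poch e (i+a) * (poch c (j+b) * poch e (j+b)))
  calc SS c e a b (ν+1)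
      = ∑ k ∈ Finset.range (ν+2), (-1:ℝ)^k * ((ν+1).choose k : ℝ) *
        (poch c (k+a) * poch e (k+a) * (poch c ((ν+1-k)+b) * poch e ((ν+1-k)+b))) := rfl
    _ = ∑ k ∈ Finset.range (ν+1), (-1:ℝ)^k * (ν.choose k : ℝ) *
          (poch c (k+a) * poch e (k+a) * (poch c ((ν-k+1)+b) * poch e ((ν-k+1)+b)))
        - ∑ k ∈ Finset.range (ν+1), (-1:ℝ)^k * (ν.choose k : ℝ) *
          (poch c ((k+1)+a) * poch e ((k+1)+a) * (poch c ((ν-k)+b) * poch e ((ν-k)+b))) := h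
    _ = SS c e a (b+1) ν - SS c e (a+1) b ν := by
        congr 1
        · refine Finset.sum_congr rfl fun k hk => ?_
          have h1 : (ν-k+1)+b = ν-k+(b+1) := by omega
          rw [h1]
        · refine Finset.sum_congr rfl fun k hk => ?_
          have h1 : (k+1)+a = k+(a+1) := by omega
          rw [h1]

lemma TT_absorb (c e : ℝ) (a b ν : ℕ) :
    TT c e a b (ν+1) = -((ν:ℝ)+1) * SS c e (a+1) b ν := by
  rw [TT, SS, Finset.sum_range_succ' _ (ν+1), Finset.mul_sum]
  simp only [Nat.cast_zero, zero_mul, add_zero]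
  refine Finset.sum_congr rfl fun k hk => ?_
  have hch : (ν+1).choose (k+1) * (k+1) = (ν+1) * ν.choose k :=
    (Nat.add_one_mul_choose_eq ν k).symm
  have hc : ((ν+1).choose (k+1) : ℝ) * ((k:ℝ)+1) = ((ν:ℝ)+1) * (ν.choose k : ℝ) := by
    exact_mod_cast congrArg (Nat.cast : ℕ → ℝ) hch
  have h1 : ν+1-(k+1) = ν-k := by omega
  have h2 : (k+1)+a = k+(a+1) := by omega
  rw [h1, h2]
  push_cast
  have hs : ((-1:ℝ))^(k+1) = -(-1)^k := by rw [pow_succ]; ring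
  linear_combination (-1:ℝ)^(k+1) *
    (poch c (k+(a+1)) * poch e (k+(a+1)) * (poch c (ν-k+b) * poch e (ν-k+b))) * hc
    - ((ν:ℝ)+1) * (ν.choose k : ℝ) *
      (poch c (k+(a+1)) * poch e (k+(a+1)) * (poch c (ν-k+b) * poch e (ν-k+b))) * hs

lemma SS_step (c e : ℝ) (a b ν : ℕ) :
    SS c e a (b+1) ν - SS c e (a+1) b ν
    = ((c+b+ν)*(e+b+ν) - (c+a)*(e+a)) * SS c e a b ν
      - (2*(c+e) + 2*a + 2*b + 2*ν) * TT c e a b ν := by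
  rw [SS, SS, SS, TT, Finset.mul_sum, Finset.mul_sum, ← Finset.sum_sub_distrib,
    ← Finset.sum_sub_distrib]
  refine Finset.sum_congr rfl fun k hk => ?_
  have hk' : k ≤ ν := by have := Finset.mem_range.mp hk; omega
  have h1 : ν-k+(b+1) = (ν-k+b)+1 := by omega
  have h2 : k+(a+1) = (k+a)+1 := by omega
  rw [h1, h2, poch_succ, poch_succ, poch_succ, poch_succ]
  have hc1 : ((ν-k+b : ℕ) : ℝ) = (ν:ℝ) - k + b := by
    push_cast [Nat.cast_sub hk']; ring
  have hc2 : ((k+a : ℕ) : ℝ) = (k:ℝ) + a := by push_cast; ring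
  rw [hc1, hc2]
  ring

lemma SS_diag (c e : ℝ) (ν : ℕ) :
    SS c e 1 1 ν = (c*e)^2 * SS (c+1) (e+1) 0 0 ν := by
  rw [SS, SS, Finset.mul_sum]
  refine Finset.sum_congr rfl fun k hk => ?_
  simp only [Nat.add_zero]
  rw [poch_succ' c, poch_succ' e, poch_succ' c (ν-k), poch_succ' e (ν-k)]
  ring

noncomputable def cfp (m : ℕ) (c e : ℝ) : ℝ :=
  ((2*m).factorial : ℝ) / (m.factorial : ℝ) * (poch c m * poch e m * poch (c+e+m) m)

noncomputable def cfv (m : ℕ) (c e : ℝ) : ℝ :=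
  ((2*m).factorial : ℝ) / (m.factorial : ℝ) *
    (poch c (m+1) * poch e (m+1) * poch (c+e+m+1) m)

lemma neg_one_pow_odd' (m : ℕ) : ((-1:ℝ))^(2*m+1) = -1 := Odd.neg_one_pow ⟨m, by omega⟩

lemma SS00_odd (c e : ℝ) (m : ℕ) : SS c e 0 0 (2*m+1) = 0 := by
  have h := SS_reflect c e 0 0 (2*m+1)
  rw [neg_one_pow_odd'] at h
  linarith

lemma S10_odd (c e : ℝ) (m : ℕ) :
    SS c e 1 0 (2*m+1) = -(SS c e 0 0 (2*m+1+1))/2 := by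
  have hp := SS_pascal c e 0 0 (2*m+1)
  have hr := SS_reflect c e 0 1 (2*m+1)
  rw [neg_one_pow_odd'] at hr
  linarith

lemma SS00_even_step (c e : ℝ) (m : ℕ) :
    SS c e 0 0 (2*m+1+1)
      = 2*(2*(m:ℝ)+1)*(c+e+(2*(m:ℝ)+1)) * SS c e 1 0 (2*m) := by
  have hp := SS_pascal c e 0 0 (2*m+1)
  have hs := SS_step c e 0 0 (2*m+1)
  have ho := SS00_odd c e m
  have ha := TT_absorb c e 0 0 (2*m)
  push_cast at hs ha ⊢
  linear_combination hp + hs + ((c+(2*(m:ℝ)+1))*(e+(2*(m:ℝ)+1)) - c*e) * ho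
    - (2*(c+e) + 2*(2*(m:ℝ)+1)) * ha

lemma key (m : ℕ) : ∀ (c e : ℝ),
    SS c e 0 0 (2*m) = cfp m c e ∧ SS c e 1 0 (2*m) = cfv m c e := by
  induction m with
  | zero =>
    intro c e
    constructor
    · simp [SS, cfp, poch]
    · simp [SS, cfv, poch]
  | succ m ih =>
    intro c e
    have ihv := (ih c e).2
    have ihp' := (ih (c+1) (e+1)).1
    have hfacne : (m.factorial : ℝ) ≠ 0 := Nat.cast_ne_zero.mpr (Nat.factorial_ne_zero m)
    have hf2 : ((2*(m+1)).factorial : ℝ)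
        = (2*(m:ℝ)+2) * (2*(m:ℝ)+1) * ((2*m).factorial : ℝ) := by
      have h9 : 2*(m+1) = (2*m+1)+1 := by omega
      rw [h9, Nat.factorial_succ, Nat.factorial_succ]; push_cast; ring
    have hf1 : ((m+1).factorial : ℝ) = ((m:ℝ)+1) * (m.factorial : ℝ) := by
      rw [Nat.factorial_succ]; push_cast; ring
    have h2m2 : 2*(m+1) = 2*m+1+1 := by omega
    -- part 1 : P value
    have hP : SS c e 0 0 (2*(m+1)) = cfp (m+1) c e := by
      rw [h2m2, SS00_even_step c e m, ihv]
      rw [cfv, cfp, hf2, hf1]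
      rw [show ((m:ℕ)+1 : ℕ) = m+1 from rfl]
      push_cast
      rw [show c+e+((m:ℝ)+1) = (c+e+m+1) from by ring]
      rw [poch_succ (c+e+(m:ℝ)+1) m, poch_succ c m, poch_succ e m]
      field_simp
      ring
    refine ⟨hP, ?_⟩
    -- part 2 : V value
    have e1 := SS_pascal c e 1 0 (2*m+1)
    have e2 := SS_step c e 1 0 (2*m+1)
    have e3 := S10_odd c e m
    have e4 := TT_absorb c e 1 0 (2*m)
    have e5 := SS_pascal c e 1 0 (2*m)
    have e6 := SS_diag c e (2*m)
    rw [h2m2] at hP ⊢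
    rw [ihp'] at e6
    -- SS 2 0 (2m) from e5, e6, e3
    have hS20 : SS c e 2 0 (2*m) = (c*e)^2 * cfp m (c+1) (e+1) + cfp (m+1) c e / 2 := by
      have := e3
      rw [hP] at this
      linarith [e5, e6]
    push_cast at e2 e4
    have hval : SS c e 1 0 (2*m+1+1)
        = ((c+(2*(m:ℝ)+1))*(e+(2*(m:ℝ)+1)) - (c+1)*(e+1)) * (-(cfp (m+1) c e)/2)
          + (2*(c+e) + 2 + 2*(2*(m:ℝ)+1)) * (2*(m:ℝ)+1)
            * ((c*e)^2 * cfp m (c+1) (e+1) + cfp (m+1) c e / 2) := by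
      have e3' := e3; rw [hP] at e3'
      linear_combination e1 + e2
        + ((c+(2*(m:ℝ)+1))*(e+(2*(m:ℝ)+1)) - (c+1)*(e+1)) * e3'
        - (2*(c+e) + 2 + 2*(2*(m:ℝ)+1)) * e4
        + (2*(c+e) + 2 + 2*(2*(m:ℝ)+1)) * (2*(m:ℝ)+1) * hS20
    rw [hval]
    -- now pure algebra with closed forms
    rw [cfp, cfp, cfv, hf2, hf1]
    push_cast
    simp only [show (c+1)+(e+1)+(m:ℝ) = c+e+(m:ℝ)+2 from by ring,
               show c+e+((m:ℝ)+1) = c+e+(m:ℝ)+1 from by ring,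
               show c+e+((m:ℝ)+1)+1 = c+e+(m:ℝ)+2 from by ring,
               show c+e+(m:ℝ)+1+1 = c+e+(m:ℝ)+2 from by ring]
    rw [poch_succ c (m+1), poch_succ e (m+1), poch_succ (c+e+(m:ℝ)+2) m,
        poch_succ' (c+e+(m:ℝ)+1) m, poch_succ' c m, poch_succ' e m]
    simp only [show c+e+(m:ℝ)+1+1 = c+e+(m:ℝ)+2 from by ring]
    push_cast
    field_simp
    ring

lemma TT00_even (c e : ℝ) (m : ℕ) : TT c e 0 0 (2*m) = (m:ℝ) * SS c e 0 0 (2*m) := by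
  have h := TT_reflect c e 0 0 (2*m)
  rw [Even.neg_one_pow ⟨m, by omega⟩] at h
  push_cast at h
  linarith

lemma TT00_odd (c e : ℝ) (m : ℕ) :
    TT c e 0 0 (2*m+1) = -(2*(m:ℝ)+1) * SS c e 1 0 (2*m) := by
  have h := TT_absorb c e 0 0 (2*m)
  push_cast at h
  linarith [h]

lemma sum_reduce (n : ℕ) (c e lam : ℝ) (hlam : lam ≠ 0) (hlamn : poch lam n ≠ 0)
    (hcn : poch (1 - c - n) n ≠ 0) (hen : poch (1 - e - n) n ≠ 0)
    (hc : poch c n ≠ 0) (he : poch e n ≠ 0) :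
    ∑ k ∈ Finset.range (n + 1),
        poch (-(n : ℝ)) k * poch c k * poch e k * poch (1 + lam) k /
          (poch (1 - c - n) k * poch (1 - e - n) k * poch lam k * k.factorial)
      = (lam * SS c e 0 0 n + TT c e 0 0 n) / (poch c n * poch e n * lam) := by
  rw [SS, TT, Finset.mul_sum, ← Finset.sum_add_distrib, Finset.sum_div]
  refine Finset.sum_congr rfl fun k hk => ?_
  have hk' : k ≤ n := by have := Finset.mem_range.mp hk; omega
  simp only [Nat.add_zero]
  -- splitting lemmas
  have hQc := poch_add c (n-k) k
  rw [show n-k+k = n from by omega] at hQc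
  have hQe := poch_add e (n-k) k
  rw [show n-k+k = n from by omega] at hQe
  have hrc : poch (1-c-(n:ℝ)) k = (-1)^k * poch (c+((n-k:ℕ):ℝ)) k := by
    have h := poch_reflect (c+((n-k:ℕ):ℝ)) k
    rw [show (1 - (c+((n-k:ℕ):ℝ)) - (k:ℝ)) = 1-c-(n:ℝ) from by
      rw [Nat.cast_sub hk']; ring] at h
    exact h
  have hre : poch (1-e-(n:ℝ)) k = (-1)^k * poch (e+((n-k:ℕ):ℝ)) k := by
    have h := poch_reflect (e+((n-k:ℕ):ℝ)) k
    rw [show (1 - (e+((n-k:ℕ):ℝ)) - (k:ℝ)) = 1-e-(n:ℝ) from by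
      rw [Nat.cast_sub hk']; ring] at h
    exact h
  have hlm : lam * poch (1+lam) k = poch lam k * (lam + k) := by
    have h1 := poch_succ lam k
    have h2 := poch_succ' lam k
    rw [show lam+1 = 1+lam from by ring] at h2
    linarith
  have hfnk : (((n-k).factorial : ℕ) : ℝ) ≠ 0 :=
    Nat.cast_ne_zero.mpr (Nat.factorial_ne_zero _)
  have hkf : ((k.factorial : ℕ) : ℝ) ≠ 0 :=
    Nat.cast_ne_zero.mpr (Nat.factorial_ne_zero _)
  have hch : (n.choose k : ℝ) * (k.factorial : ℝ) * ((n-k).factorial : ℝ)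
      = (n.factorial : ℝ) := by
    exact_mod_cast congrArg (Nat.cast : ℕ → ℝ)
      (Nat.choose_mul_factorial_mul_factorial hk')
  have hP : poch (-(n:ℝ)) k = (-1)^k * (n.choose k : ℝ) * (k.factorial : ℝ) := by
    apply mul_right_cancel₀ hfnk
    rw [poch_neg_nat n k hk', ← hch]; ring
  have hd1 : poch (1-c-(n:ℝ)) k ≠ 0 := poch_ne_zero_left hcn hk'
  have hd2 : poch (1-e-(n:ℝ)) k ≠ 0 := poch_ne_zero_left hen hk'
  have hd3 : poch lam k ≠ 0 := poch_ne_zero_left hlamn hk'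
  rw [div_eq_div_iff (by exact mul_ne_zero (mul_ne_zero (mul_ne_zero hd1 hd2) hd3) hkf)
    (by exact mul_ne_zero (mul_ne_zero hc he) hlam)]
  rw [hP, hQc, hQe, hrc, hre]
  rcases Nat.even_or_odd k with hpar | hpar
  · simp only [Even.neg_one_pow hpar]
    linear_combination ((n.choose k : ℝ) * (k.factorial : ℝ) * poch c k * poch e k *
      poch c (n-k) * poch e (n-k) * poch (c+((n-k:ℕ):ℝ)) k * poch (e+((n-k:ℕ):ℝ)) k) * hlm
  · simp only [Odd.neg_one_pow hpar]
    linear_combination (-(n.choose k : ℝ) * (k.factorial : ℝ) * poch c k * poch e k *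
      poch c (n-k) * poch e (n-k) * poch (c+((n-k:ℕ):ℝ)) k * poch (e+((n-k:ℕ):ℝ)) k) * hlm

/-- Equation (7): evaluation of the terminating
`₄F₃(-n, c, e, 1+λ; 1-c-n, 1-e-n, λ; 1)` series. -/
theorem stmt_7 (n : ℕ) (c e lam : ℝ)
    (hlam : lam ≠ 0)
    (hlamn : poch lam n ≠ 0)
    (hcn : poch (1 - c - n) n ≠ 0)
    (hen : poch (1 - e - n) n ≠ 0) :
    ∑ k ∈ Finset.range (n + 1),
        poch (-(n : ℝ)) k * poch c k * poch e k * poch (1 + lam) k /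
          (poch (1 - c - n) k * poch (1 - e - n) k * poch lam k * k.factorial)
      = (poch (-(n : ℝ)) (n / 2) * poch (1 - c - e - n) (n / 2) /
          (poch (1 - c - n) (n / 2) * poch (1 - e - n) (n / 2)))
        * (if Even n then (2 * lam + n) / (2 * lam) else -((1 + (n : ℝ)) / (2 * lam))) := by
  have hc : poch c n ≠ 0 := by
    rw [poch_reflect c n] at hcn
    exact (mul_ne_zero_iff.mp hcn).2
  have he : poch e n ≠ 0 := by
    rw [poch_reflect e n] at hen
    exact (mul_ne_zero_iff.mp hen).2
  rw [sum_reduce n c e lam hlam hlamn hcn hen hc he]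
  have hmf : ∀ j : ℕ, ((j.factorial : ℕ):ℝ) ≠ 0 :=
    fun j => Nat.cast_ne_zero.mpr (Nat.factorial_ne_zero _)
  rcases Nat.even_or_odd n with ⟨m, hm⟩ | ⟨m, hm⟩
  · -- even case
    have hn : n = 2*m := by omega
    subst hn
    rw [if_pos ⟨m, by omega⟩, show (2*m)/2 = m from by omega]
    rw [TT00_even, (key m c e).1]
    -- conversions
    have hPm : poch (-((2*m:ℕ):ℝ)) m = (-1)^m * ((2*m).factorial : ℝ) / (m.factorial : ℝ) := by
      rw [eq_div_iff (hmf m)]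
      have h := poch_neg_nat (2*m) m (by omega)
      rw [show 2*m - m = m from by omega] at h
      linarith
    have hbc : poch (1-c-((2*m:ℕ):ℝ)) m = (-1)^m * poch (c+(m:ℝ)) m := by
      have h := poch_reflect (c+(m:ℝ)) m
      rw [show (1 - (c+(m:ℝ)) - (m:ℝ)) = 1-c-((2*m:ℕ):ℝ) from by push_cast; ring] at h
      exact h
    have hbe : poch (1-e-((2*m:ℕ):ℝ)) m = (-1)^m * poch (e+(m:ℝ)) m := by
      have h := poch_reflect (e+(m:ℝ)) m
      rw [show (1 - (e+(m:ℝ)) - (m:ℝ)) = 1-e-((2*m:ℕ):ℝ) from by push_cast; ring] at h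
      exact h
    have hbce : poch (1-c-e-((2*m:ℕ):ℝ)) m = (-1)^m * poch (c+e+(m:ℝ)) m := by
      have h := poch_reflect (c+e+(m:ℝ)) m
      rw [show (1 - (c+e+(m:ℝ)) - (m:ℝ)) = 1-c-e-((2*m:ℕ):ℝ) from by push_cast; ring] at h
      exact h
    have hsc : poch c (2*m) = poch c m * poch (c+(m:ℝ)) m := by
      have h := poch_add c m m
      rw [show m+m = 2*m from by omega] at h
      exact h
    have hse : poch e (2*m) = poch e m * poch (e+(m:ℝ)) m := by
      have h := poch_add e m m
      rw [show m+m = 2*m from by omega] at h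
      exact h
    have hc1 : poch c m ≠ 0 := by rw [hsc] at hc; exact (mul_ne_zero_iff.mp hc).1
    have hc2 : poch (c+(m:ℝ)) m ≠ 0 := by rw [hsc] at hc; exact (mul_ne_zero_iff.mp hc).2
    have he1 : poch e m ≠ 0 := by rw [hse] at he; exact (mul_ne_zero_iff.mp he).1
    have he2 : poch (e+(m:ℝ)) m ≠ 0 := by rw [hse] at he; exact (mul_ne_zero_iff.mp he).2
    rw [cfp, hPm, hbc, hbe, hbce, hsc, hse]
    push_cast
    rcases Nat.even_or_odd m with hp | hp
    · simp only [Even.neg_one_pow hp]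
      field_simp
    · simp only [Odd.neg_one_pow hp]
      field_simp
  · -- odd case
    have hn : n = 2*m+1 := by omega
    subst hn
    rw [if_neg (by exact (Nat.not_even_iff_odd).mpr ⟨m, by omega⟩),
      show (2*m+1)/2 = m from by omega]
    rw [TT00_odd, (key m c e).2, SS00_odd]
    have hPm : poch (-((2*m+1:ℕ):ℝ)) m
        = (-1)^m * ((2*m+1).factorial : ℝ) / ((m+1).factorial : ℝ) := by
      rw [eq_div_iff (hmf (m+1))]
      have h := poch_neg_nat (2*m+1) m (by omega)
      rw [show 2*m+1 - m = m+1 from by omega] at h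
      linarith
    have hbc : poch (1-c-((2*m+1:ℕ):ℝ)) m = (-1)^m * poch (c+(m:ℝ)+1) m := by
      have h := poch_reflect (c+(m:ℝ)+1) m
      rw [show (1 - (c+(m:ℝ)+1) - (m:ℝ)) = 1-c-((2*m+1:ℕ):ℝ) from by push_cast; ring] at h
      exact h
    have hbe : poch (1-e-((2*m+1:ℕ):ℝ)) m = (-1)^m * poch (e+(m:ℝ)+1) m := by
      have h := poch_reflect (e+(m:ℝ)+1) m
      rw [show (1 - (e+(m:ℝ)+1) - (m:ℝ)) = 1-e-((2*m+1:ℕ):ℝ) from by push_cast; ring] at h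
      exact h
    have hbce : poch (1-c-e-((2*m+1:ℕ):ℝ)) m = (-1)^m * poch (c+e+(m:ℝ)+1) m := by
      have h := poch_reflect (c+e+(m:ℝ)+1) m
      rw [show (1 - (c+e+(m:ℝ)+1) - (m:ℝ)) = 1-c-e-((2*m+1:ℕ):ℝ) from by push_cast; ring] at h
      exact h
    have hsc : poch c (2*m+1) = poch c (m+1) * poch (c+(m:ℝ)+1) m := by
      have h := poch_add c (m+1) m
      rw [show (m+1)+m = 2*m+1 from by omega,
        show c+((m+1:ℕ):ℝ) = c+(m:ℝ)+1 from by push_cast; ring] at h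
      exact h
    have hse : poch e (2*m+1) = poch e (m+1) * poch (e+(m:ℝ)+1) m := by
      have h := poch_add e (m+1) m
      rw [show (m+1)+m = 2*m+1 from by omega,
        show e+((m+1:ℕ):ℝ) = e+(m:ℝ)+1 from by push_cast; ring] at h
      exact h
    have hc1 : poch c (m+1) ≠ 0 := by rw [hsc] at hc; exact (mul_ne_zero_iff.mp hc).1
    have hc2 : poch (c+(m:ℝ)+1) m ≠ 0 := by rw [hsc] at hc; exact (mul_ne_zero_iff.mp hc).2
    have he1 : poch e (m+1) ≠ 0 := by rw [hse] at he; exact (mul_ne_zero_iff.mp he).1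
    have he2 : poch (e+(m:ℝ)+1) m ≠ 0 := by rw [hse] at he; exact (mul_ne_zero_iff.mp he).2
    have hf1 : (((m+1).factorial : ℕ):ℝ) = ((m:ℝ)+1) * (m.factorial : ℝ) := by
      rw [Nat.factorial_succ]; push_cast; ring
    have hf2 : (((2*m+1).factorial : ℕ):ℝ) = (2*(m:ℝ)+1) * ((2*m).factorial : ℝ) := by
      rw [show 2*m+1 = (2*m)+1 from rfl, Nat.factorial_succ]; push_cast; ring
    rw [cfv, hPm, hbc, hbe, hbce, hsc, hse, hf1, hf2]
    push_cast
    rcases Nat.even_or_odd m with hp | hp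
    · simp only [Even.neg_one_pow hp]
      field_simp
      ring
    · simp only [Odd.neg_one_pow hp]
      field_simp
      ring
end
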